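/- Let n ≥ 1, α ≥ 1 and 0 ≤ q < α/(n+α). Then the generalized Gaussian density g_{α,q} is log-concave on ℝⁿ: for all x, y ∈ ℝⁿ and all λ ∈ [0,1], g_{α,q}((1−λ)x + λy) ≥ g_{α,q}(x)^{1−λ}·g_{α,q}(y)^{λ}. -/

import Mathlib

open MeasureTheory Real Filter
open scoped Pointwise RealInnerProductSpace

/-- The (unnormalized) radial profile of the generalized Gaussian density in dimension `n`:
`r ↦ max(1 − (q/α) r^α, 0)^(1/q − n/α − 1)` for `q ≠ 0` and `r ↦ exp(−r^α/α)` for `q = 0`. -/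
noncomputable def gProfile (n : ℕ) (α q r : ℝ) : ℝ :=
  if q = 0 then Real.exp (-(r ^ α) / α)
  else (max (1 - q / α * r ^ α) 0) ^ (1 / q - (n : ℝ) / α - 1)

/-- The partition function `Z(α,q)`, i.e. the normalizing constant making the generalized
Gaussian density a probability density. -/
noncomputable def Zconst (n : ℕ) (α q : ℝ) : ℝ :=
  ∫ x : EuclideanSpace ℝ (Fin n), gProfile n α q ‖x‖

/-- The generalized Gaussian density `g_{α,q}` on `ℝⁿ`. -/
noncomputable def gGauss (n : ℕ) (α q : ℝ) (x : EuclideanSpace ℝ (Fin n)) : ℝ :=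
  (Zconst n α q)⁻¹ * gProfile n α q ‖x‖

/-- The generalized Gaussian volume `G_{α,q}(K) = ∫_K g_{α,q}(x) dx`. -/
noncomputable def Ggen (n : ℕ) (α q : ℝ) (K : Set (EuclideanSpace ℝ (Fin n))) : ℝ :=
  ∫ x in K, gGauss n α q x

lemma gProfile_nonneg (n : ℕ) (α q r : ℝ) : 0 ≤ gProfile n α q r := by
  unfold gProfile
  split
  · exact (Real.exp_pos _).le
  · exact Real.rpow_nonneg (le_max_right _ _) _

/-- Key radial inequality: log-concavity of the (decreasing) radial profile, composed with
the triangle inequality for norms. -/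
lemma gProfile_key (n : ℕ) (α q : ℝ) (hα : 1 ≤ α) (hq0 : 0 ≤ q)
    (hp : q ≠ 0 → 0 < 1 / q - (n : ℝ) / α - 1)
    {a b r l : ℝ} (ha : 0 ≤ a) (hb : 0 ≤ b) (hr : 0 ≤ r) (hl0 : 0 ≤ l) (hl1 : l ≤ 1)
    (hconv : r ≤ (1 - l) * a + l * b) :
    gProfile n α q a ^ (1 - l) * gProfile n α q b ^ l ≤ gProfile n α q r := by
  have hα0 : (0 : ℝ) < α := lt_of_lt_of_le one_pos hα
  have hl0' : 0 ≤ 1 - l := by linarith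
  have hrpow : r ^ α ≤ (1 - l) * a ^ α + l * b ^ α := by
    have h1 : r ^ α ≤ ((1 - l) * a + l * b) ^ α :=
      Real.rpow_le_rpow hr hconv hα0.le
    have h2 := (convexOn_rpow hα).2 (Set.mem_Ici.2 ha) (Set.mem_Ici.2 hb) hl0' hl0 (by ring)
    simp only [smul_eq_mul] at h2
    linarith
  unfold gProfile
  split
  · -- q = 0
    rw [← Real.exp_mul, ← Real.exp_mul, ← Real.exp_add, Real.exp_le_exp]
    rw [div_mul_eq_mul_div, div_mul_eq_mul_div, ← add_div,
      div_le_div_iff_of_pos_right hα0]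
    nlinarith
  · -- q ≠ 0
    rename_i hqne
    have hpnn := (hp hqne).le
    have hpne : 1 / q - (n : ℝ) / α - 1 ≠ 0 := (hp hqne).ne'
    set p := 1 / q - (n : ℝ) / α - 1 with hpdef
    have hc : 0 ≤ q / α := div_nonneg hq0 hα0.le
    rcases eq_or_lt_of_le hl0 with hl | hl
    · subst hl
      simp only [sub_zero, Real.rpow_one, Real.rpow_zero, mul_one, mul_zero, add_zero] at *
      apply Real.rpow_le_rpow (le_max_right _ _) _ hpnn
      apply max_le_max_right
      nlinarith [mul_le_mul_of_nonneg_left hrpow hc]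
    rcases eq_or_lt_of_le hl1 with hl' | hl'
    · subst hl'
      simp only [sub_self, Real.rpow_one, Real.rpow_zero, one_mul, zero_mul, zero_add] at *
      apply Real.rpow_le_rpow (le_max_right _ _) _ hpnn
      apply max_le_max_right
      nlinarith [mul_le_mul_of_nonneg_left hrpow hc]
    have h1l : (0 : ℝ) < 1 - l := by linarith
    by_cases hA : 1 - q / α * a ^ α ≤ 0
    · rw [max_eq_right hA, Real.zero_rpow hpne, Real.zero_rpow h1l.ne', zero_mul]
      exact Real.rpow_nonneg (le_max_right _ _) _
    by_cases hB : 1 - q / α * b ^ α ≤ 0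
    · rw [max_eq_right hB, Real.zero_rpow hpne, Real.zero_rpow hl.ne', mul_zero]
      exact Real.rpow_nonneg (le_max_right _ _) _
    push_neg at hA hB
    set A := 1 - q / α * a ^ α with hAdef
    set B := 1 - q / α * b ^ α with hBdef
    rw [max_eq_left hA.le, max_eq_left hB.le]
    have hstep : A ^ (1 - l) * B ^ l ≤ max (1 - q / α * r ^ α) 0 := by
      have hgm : A ^ (1 - l) * B ^ l ≤ (1 - l) * A + l * B :=
        Real.geom_mean_le_arith_mean2_weighted hl0' hl0 hA.le hB.le (by ring)
      have harith : (1 - l) * A + l * B ≤ 1 - q / α * r ^ α := by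
        have := mul_le_mul_of_nonneg_left hrpow hc
        rw [hAdef, hBdef]; nlinarith
      exact hgm.trans (harith.trans (le_max_left _ _))
    calc (A ^ p) ^ (1 - l) * (B ^ p) ^ l
        = (A ^ (1 - l) * B ^ l) ^ p := by
          rw [Real.mul_rpow (Real.rpow_nonneg hA.le _) (Real.rpow_nonneg hB.le _),
            ← Real.rpow_mul hA.le, ← Real.rpow_mul hB.le,
            ← Real.rpow_mul hA.le, ← Real.rpow_mul hB.le, mul_comm p, mul_comm p]
      _ ≤ (max (1 - q / α * r ^ α) 0) ^ p :=
          Real.rpow_le_rpow (mul_nonneg (Real.rpow_nonneg hA.le _) (Real.rpow_nonneg hB.le _))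
            hstep hpnn

/-- For `α ≥ 1` and `0 ≤ q < α/(n+α)`, the generalized Gaussian density
`g_{α,q}` is log-concave on `ℝⁿ`. -/
theorem generalized_gaussian_log_concave
    (n : ℕ) (hn : 1 ≤ n) (α q : ℝ) (hα : 1 ≤ α) (hq0 : 0 ≤ q)
    (hq : q < α / ((n : ℝ) + α)) :
    ∀ x y : EuclideanSpace ℝ (Fin n), ∀ l ∈ Set.Icc (0 : ℝ) 1,
      gGauss n α q x ^ (1 - l) * gGauss n α q y ^ l
        ≤ gGauss n α q ((1 - l) • x + l • y) := by
  intro x y l hl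
  obtain ⟨hl0, hl1⟩ := hl
  have hα0 : (0 : ℝ) < α := lt_of_lt_of_le one_pos hα
  have hnα : (0 : ℝ) < (n : ℝ) + α := by positivity
  have hp : q ≠ 0 → 0 < 1 / q - (n : ℝ) / α - 1 := by
    intro hqne
    have hq' : 0 < q := lt_of_le_of_ne hq0 (Ne.symm hqne)
    have h1 : q * ((n : ℝ) + α) < α := (lt_div_iff₀ hnα).1 hq
    have h2 : ((n : ℝ) / α + 1) < 1 / q := by
      rw [show (n : ℝ) / α + 1 = ((n : ℝ) + α) / α by field_simp, div_lt_div_iff₀ hα0 hq']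
      nlinarith
    linarith
  have hZ : 0 ≤ (Zconst n α q)⁻¹ := by
    apply inv_nonneg.2
    exact integral_nonneg fun x => gProfile_nonneg n α q ‖x‖
  have hconv : ‖(1 - l) • x + l • y‖ ≤ (1 - l) * ‖x‖ + l * ‖y‖ := by
    calc ‖(1 - l) • x + l • y‖ ≤ ‖(1 - l) • x‖ + ‖l • y‖ := norm_add_le _ _
      _ = (1 - l) * ‖x‖ + l * ‖y‖ := by
          rw [norm_smul, norm_smul, Real.norm_of_nonneg (by linarith),
            Real.norm_of_nonneg hl0]
  have hkey := gProfile_key n α q hα hq0 hp (norm_nonneg x) (norm_nonneg y)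
    (norm_nonneg _) hl0 hl1 hconv
  unfold gGauss
  rw [Real.mul_rpow hZ (gProfile_nonneg _ _ _ _), Real.mul_rpow hZ (gProfile_nonneg _ _ _ _)]
  have hZsum : (Zconst n α q)⁻¹ ^ (1 - l) * (Zconst n α q)⁻¹ ^ l = (Zconst n α q)⁻¹ := by
    rw [← Real.rpow_add' hZ (by norm_num)]
    norm_num
  calc (Zconst n α q)⁻¹ ^ (1 - l) * gProfile n α q ‖x‖ ^ (1 - l) *
        ((Zconst n α q)⁻¹ ^ l * gProfile n α q ‖y‖ ^ l)
      = (Zconst n α q)⁻¹ * (gProfile n α q ‖x‖ ^ (1 - l) * gProfile n α q ‖y‖ ^ l) := by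
        rw [mul_mul_mul_comm, hZsum]
    _ ≤ (Zconst n α q)⁻¹ * gProfile n α q ‖(1 - l) • x + l • y‖ :=
        mul_le_mul_of_nonneg_left hkey hZ
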